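/- There are no elements a, b, c in Q(√5) with ac ≠ 0 satisfying simultaneously (a+c)·b/(a·c) = -5 - 2√5 and (a² + b² + c²)/(a·c) = 9 + 4√5. -/

import Mathlib

/-- An element of ℝ lying in the real quadratic field Q(√5). -/
def InQsqrt5 (x : ℝ) : Prop := ∃ p q : ℚ, x = p + q * Real.sqrt 5

lemma sqrt5_irr : Irrational (Real.sqrt 5) := by
  have h : Irrational (Real.sqrt (5 : ℕ)) := (by norm_num : Nat.Prime 5).irrational_sqrt
  simpa using h

lemma rat_split (p q : ℚ) (h : (p : ℝ) + q * Real.sqrt 5 = 0) : p = 0 ∧ q = 0 := by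
  by_cases hq : q = 0
  · subst hq
    simp at h
    exact ⟨by exact_mod_cast h, rfl⟩
  · exfalso
    apply sqrt5_irr
    refine ⟨-p / q, ?_⟩
    have hq' : (q : ℝ) ≠ 0 := by exact_mod_cast hq
    push_cast
    field_simp
    linarith [h]

lemma not_sq5 (p q : ℚ) (h : p ^ 2 = 5 * q ^ 2) : p = 0 ∧ q = 0 := by
  by_cases hq : q = 0
  · subst hq
    simp at h
    exact ⟨by simpa using h, rfl⟩
  · exfalso
    apply sqrt5_irr
    refine ⟨|p / q|, ?_⟩
    have hq' : (q : ℝ) ≠ 0 := by exact_mod_cast hq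
    have h2 : ((p : ℝ) / q) ^ 2 = 5 := by
      field_simp
      exact_mod_cast (by rw [h]; ring : p ^ 2 = q ^ 2 * 5)
    have h3 : Real.sqrt 5 = |(p : ℝ) / q| := by
      rw [← h2, Real.sqrt_sq_eq_abs]
    rw [h3]
    push_cast
    rfl

/-- Norm argument: if 2*(pd+qd√5)² = (r1+r2√5)*(pu+qu√5)² and the norm r1²-5r2² is
negative, then pu = qu = 0. -/
lemma norm_aux (r1 r2 pd qd pu qu : ℚ) (hneg : r1 ^ 2 - 5 * r2 ^ 2 < 0)
    (h : 2 * ((pd : ℝ) + qd * Real.sqrt 5) ^ 2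
        = ((r1 : ℝ) + r2 * Real.sqrt 5) * ((pu : ℝ) + qu * Real.sqrt 5) ^ 2) :
    pu = 0 ∧ qu = 0 := by
  set S := Real.sqrt 5 with hSdef
  have hS : S ^ 2 = 5 := Real.sq_sqrt (by norm_num)
  have hsplit : ((2 * pd ^ 2 + 10 * qd ^ 2 - r1 * (pu ^ 2 + 5 * qu ^ 2)
        - 10 * r2 * pu * qu : ℚ) : ℝ)
      + ((4 * pd * qd - r2 * (pu ^ 2 + 5 * qu ^ 2) - 2 * r1 * pu * qu : ℚ) : ℝ) * S = 0 := by
    push_cast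
    linear_combination h + ((-2 : ℝ) * qd ^ 2 + 2 * r2 * pu * qu + r1 * qu ^ 2
      + r2 * qu ^ 2 * S) * hS
  obtain ⟨e1, e2⟩ := rat_split _ _ hsplit
  have hz : 4 * (pd ^ 2 - 5 * qd ^ 2) ^ 2
      = (r1 ^ 2 - 5 * r2 ^ 2) * (pu ^ 2 - 5 * qu ^ 2) ^ 2 := by
    linear_combination (2 * pd ^ 2 + 10 * qd ^ 2 + r1 * (pu ^ 2 + 5 * qu ^ 2)
        + 10 * r2 * pu * qu) * e1
      - 5 * (4 * pd * qd + r2 * (pu ^ 2 + 5 * qu ^ 2) + 2 * r1 * pu * qu) * e2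
  have hle : (r1 ^ 2 - 5 * r2 ^ 2) * (pu ^ 2 - 5 * qu ^ 2) ^ 2 ≤ 0 :=
    mul_nonpos_iff.mpr (Or.inr ⟨hneg.le, sq_nonneg _⟩)
  have hge : (0 : ℚ) ≤ (r1 ^ 2 - 5 * r2 ^ 2) * (pu ^ 2 - 5 * qu ^ 2) ^ 2 := hz ▸ by positivity
  have h3 := le_antisymm hle hge
  have hB : pu ^ 2 - 5 * qu ^ 2 = 0 := by
    rcases mul_eq_zero.mp h3 with h' | h'
    · exact absurd h' hneg.ne
    · exact sq_eq_zero_iff.mp h'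
  have h0 : pu ^ 2 = 5 * qu ^ 2 := by linarith
  exact not_sq5 _ _ h0

/-- There are no a, b, c ∈ Q(√5) with ac ≠ 0 satisfying
(a+c)b/(ac) = -5 - 2√5 and (a²+b²+c²)/(ac) = 9 + 4√5. -/
theorem stmt_1 :
    ¬ ∃ a b c : ℝ, InQsqrt5 a ∧ InQsqrt5 b ∧ InQsqrt5 c ∧ a * c ≠ 0 ∧
      (a + c) * b / (a * c) = -5 - 2 * Real.sqrt 5 ∧
      (a ^ 2 + b ^ 2 + c ^ 2) / (a * c) = 9 + 4 * Real.sqrt 5 := by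
  rintro ⟨a, b, c, ⟨pa, qa, ha⟩, ⟨pb, qb, hb⟩, ⟨pc, qc, hc⟩, hac, h1, h2⟩
  set S := Real.sqrt 5 with hSdef
  have hS : S ^ 2 = 5 := Real.sq_sqrt (by norm_num)
  have h1' : (a + c) * b = (-5 - 2 * S) * (a * c) := (div_eq_iff hac).mp h1
  have h2' : a ^ 2 + b ^ 2 + c ^ 2 = (9 + 4 * S) * (a * c) := (div_eq_iff hac).mp h2
  have hu : (b + (a + c)) ^ 2 = a * c := by linear_combination h2' + 2 * h1'
  have hu0 : b + (a + c) ≠ 0 := by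
    intro h
    apply hac
    rw [← hu, h]
    ring
  have hU : b + (a + c) = ((pb + pa + pc : ℚ) : ℝ) + ((qb + qa + qc : ℚ) : ℝ) * S := by
    rw [ha, hb, hc]; push_cast; ring
  have hD : a - c = ((pa - pc : ℚ) : ℝ) + ((qa - qc : ℚ) : ℝ) * S := by
    rw [ha, hc]; push_cast; ring
  have hfac : (b - (a + c) - (4 + S) * (b + (a + c)))
      * (b - (a + c) + (4 + S) * (b + (a + c))) = 0 := by
    linear_combination h2' - 2 * h1' - (21 + 8 * S) * hu - (b + (a + c)) ^ 2 * hS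
  have hUzero : pb + pa + pc = 0 ∧ qb + qa + qc = 0 → False := by
    rintro ⟨hp, hq⟩
    apply hu0
    rw [hU, hp, hq]
    push_cast
    ring
  rcases mul_eq_zero.mp hfac with hcase | hcase
  · have hs : 2 * (a + c) + (3 + S) * (b + (a + c)) = 0 := by linear_combination -hcase
    have hkey : 2 * (a - c) ^ 2 = (3 * S - 1) * (b + (a + c)) ^ 2 := by
      linear_combination ((2 * (a + c) - (3 + S) * (b + (a + c))) / 2) * hs
        + ((b + (a + c)) ^ 2 / 2) * hS + 8 * hu
    refine hUzero (norm_aux (-1) 3 (pa - pc) (qa - qc) (pb + pa + pc) (qb + qa + qc)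
      (by norm_num) ?_)
    rw [← hD, ← hU]
    push_cast
    linear_combination hkey
  · have hs : 2 * (a + c) - (5 + S) * (b + (a + c)) = 0 := by linear_combination -hcase
    have hkey : 2 * (a - c) ^ 2 = (7 + 5 * S) * (b + (a + c)) ^ 2 := by
      linear_combination ((2 * (a + c) + (5 + S) * (b + (a + c))) / 2) * hs
        + ((b + (a + c)) ^ 2 / 2) * hS + 8 * hu
    refine hUzero (norm_aux 7 5 (pa - pc) (qa - qc) (pb + pa + pc) (qb + qa + qc)
      (by norm_num) ?_)
    rw [← hD, ← hU]
    push_cast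
    linear_combination hkey
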